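/- On the interval z ≥ ỹ (so z/α > ỹ), the difference ũ''(z) - (1/α²) ũ''(z/α) = ((1-k)/k²) A₂ z^{-1/k - 1}(1 - α^{(1-k)/k}) is strictly negative. -/

import Mathlib

lemma aux_d1 (A c : ℝ) {x : ℝ} (hx : x ≠ 0) :
    deriv (fun y : ℝ => A * y ^ c) x = A * (c * x ^ (c - 1)) :=
  ((Real.hasDerivAt_rpow_const (p := c) (Or.inl hx)).const_mul A).deriv

lemma aux_d2 (A c : ℝ) {x : ℝ} (hx : 0 < x) :
    deriv (deriv (fun y : ℝ => A * y ^ c)) x = A * c * (c - 1) * x ^ (c - 2) := by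
  have h1 : deriv (fun y : ℝ => A * y ^ c) =ᶠ[nhds x] fun y => (A * c) * y ^ (c - 1) := by
    filter_upwards [eventually_ne_nhds hx.ne'] with y hy
    rw [aux_d1 A c hy]; ring
  rw [h1.deriv_eq, aux_d1 (A * c) (c - 1) hx.ne']
  have : c - 1 - 1 = c - 2 := by ring
  rw [this]; ring

theorem stmt_9 (δ k w L α : ℝ) (hδ0 : 0 < δ) (hδ1 : δ < 1) (hk : 1 < k)
    (hw : 0 < w) (hL : 0 < L) (hα0 : 0 < α) (hα1 : α < 1)
    (A₂ ytil : ℝ)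
    (hA₂ : A₂ = k / (δ * (1 - k)) * ((1 - δ) / (δ * w)) ^ ((1 - k) * (1 - δ) / k))
    (hytil : ytil = L ^ (-k) * ((1 - δ) / (δ * w)) ^ (1 - δ * (1 - k)))
    (g : ℝ → ℝ)
    (hg : ∀ z : ℝ, g z = A₂ * z ^ (-(1 - k) / k)) :
    ∀ z : ℝ, ytil ≤ z →
      (deriv (deriv g) z - 1 / α ^ 2 * deriv (deriv g) (z / α)
          = (1 - k) / k ^ 2 * A₂ * z ^ (-1 / k - 1) * (1 - α ^ ((1 - k) / k))) ∧
      deriv (deriv g) z - 1 / α ^ 2 * deriv (deriv g) (z / α) < 0 := by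
  have hk0 : k ≠ 0 := by positivity
  set c : ℝ := -(1 - k) / k with hc
  have hgfun : g = fun y : ℝ => A₂ * y ^ c := funext hg
  have hytil0 : 0 < ytil := by
    rw [hytil]
    have h1 : 0 < (1 - δ) / (δ * w) := by
      apply div_pos (by linarith) (by positivity)
    exact mul_pos (Real.rpow_pos_of_pos hL _) (Real.rpow_pos_of_pos h1 _)
  intro z hz
  have hz0 : 0 < z := lt_of_lt_of_le hytil0 hz
  have hzα0 : 0 < z / α := by positivity
  rw [hgfun, aux_d2 A₂ c hz0, aux_d2 A₂ c hzα0]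
  -- key exponent facts
  have ec2 : c - 2 = -1 / k - 1 := by rw [hc]; field_simp; ring
  have enc : -c = (1 - k) / k := by rw [hc]; ring
  have ecc : c * (c - 1) = (1 - k) / k ^ 2 := by
    rw [hc]
    have h : (-(1 - k) / k) - 1 = -1 / k := by field_simp; ring
    rw [h, div_mul_div_comm]; ring
  -- (z/α)^(c-2) = z^(c-2) * α^(-(c-2))
  have hdiv : (z / α) ^ (c - 2) = z ^ (c - 2) * α ^ (-(c - 2)) := by
    rw [Real.div_rpow hz0.le hα0.le, Real.rpow_neg hα0.le, div_eq_mul_inv]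
  have hα2 : (α : ℝ) ^ (2 : ℕ) = α ^ (2 : ℝ) := by
    rw [← Real.rpow_natCast α 2]; norm_num
  have hmerge : 1 / α ^ (2 : ℕ) * α ^ (-(c - 2)) = α ^ (-c) := by
    rw [hα2, one_div, ← Real.rpow_neg hα0.le, ← Real.rpow_add hα0]
    ring_nf
  have hmain : A₂ * c * (c - 1) * z ^ (c - 2) -
      1 / α ^ 2 * (A₂ * c * (c - 1) * (z / α) ^ (c - 2))
      = (1 - k) / k ^ 2 * A₂ * z ^ (-1 / k - 1) * (1 - α ^ ((1 - k) / k)) := by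
    rw [hdiv, ← ec2, ← enc]
    calc A₂ * c * (c - 1) * z ^ (c - 2) -
        1 / α ^ 2 * (A₂ * c * (c - 1) * (z ^ (c - 2) * α ^ (-(c - 2))))
        = (c * (c - 1)) * A₂ * z ^ (c - 2) * (1 - 1 / α ^ 2 * α ^ (-(c - 2))) := by ring
      _ = (1 - k) / k ^ 2 * A₂ * z ^ (c - 2) * (1 - α ^ (-c)) := by
          rw [ecc, hmerge]
  refine ⟨hmain, ?_⟩
  rw [hmain]
  have h1 : (1 - k) / k ^ 2 < 0 := by
    apply div_neg_of_neg_of_pos (by linarith) (by positivity)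
  have hA2neg : A₂ < 0 := by
    rw [hA₂]
    apply mul_neg_of_neg_of_pos
    · apply div_neg_of_pos_of_neg (by linarith)
      apply mul_neg_of_pos_of_neg hδ0 (by linarith)
    · exact Real.rpow_pos_of_pos (div_pos (by linarith) (by positivity)) _
  have h2 : 0 < z ^ (-1 / k - 1) := Real.rpow_pos_of_pos hz0 _
  have h3 : 1 - α ^ ((1 - k) / k) < 0 := by
    have : 1 < α ^ ((1 - k) / k) := by
      apply Real.one_lt_rpow_of_pos_of_lt_one_of_neg hα0 hα1
      apply div_neg_of_neg_of_pos (by linarith) (by linarith)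
    linarith
  have := mul_pos (mul_pos (mul_pos_of_neg_of_neg h1 hA2neg) h2) (by linarith : 0 < -(1 - α ^ ((1 - k) / k)))
  nlinarith [this]
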